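/- arXiv:1902.00787 — 4 statements merged into one kernel-verified Lean document; each statement's English description precedes it below -/
import Mathlib

section
/- A k-bilinear map ⟪−,−⟫ : A × A → A ⊗ A satisfies the antisymmetry condition ⟪b,a⟫ = −τ(⟪a,b⟫) for all a, b ∈ A if and only if its associated trilinear maps satisfy the cyclicity condition m(f,b,g)(a) = −g(n(a,f,b)) for all a, b ∈ A and f, g ∈ A*. (This is the correspondence, established in the proof of Theorem 5.1, between condition (i) of a double Poisson bracket and the cyclic invariance of the triple product m₃ with respect to the natural evaluation pairing on A ⊕ A*[−1].) -/
open TensorProduct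

noncomputable section

variable {k : Type*} [Field k] [CharZero k]
variable {A : Type*} [NonUnitalRing A] [Module k A] [SMulCommClass k A A] [IsScalarTower k A A]

/-- Outer left action of `A` on `A ⊗ A`: `a · (u ⊗ v) = (a*u) ⊗ v`. -/
def lAct (a : A) : A ⊗[k] A →ₗ[k] A ⊗[k] A :=
  TensorProduct.map (LinearMap.mulLeft k a) LinearMap.id

/-- Outer right action of `A` on `A ⊗ A`: `(u ⊗ v) · b = u ⊗ (v*b)`. -/
def rAct (b : A) : A ⊗[k] A →ₗ[k] A ⊗[k] A :=
  TensorProduct.map LinearMap.id (LinearMap.mulRight k b)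

/-- `⟪a, u ⊗ v⟫_L = ⟪a,u⟫ ⊗ v`, extended linearly. -/
def brL (br : A →ₗ[k] A →ₗ[k] A ⊗[k] A) (a : A) :
    A ⊗[k] A →ₗ[k] (A ⊗[k] A) ⊗[k] A :=
  TensorProduct.map (br a) LinearMap.id

/-- The cyclic permutation `σ(u ⊗ v ⊗ w) = w ⊗ u ⊗ v` on `(A ⊗ A) ⊗ A`. -/
def cyc : (A ⊗[k] A) ⊗[k] A →ₗ[k] (A ⊗[k] A) ⊗[k] A :=
  (TensorProduct.assoc k A A A).symm.toLinearMap ∘ₗ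
    (TensorProduct.comm k (A ⊗[k] A) A).toLinearMap

/-- A double Poisson bracket: antisymmetry, Leibniz, and double Jacobi. -/
def IsDoublePoisson (br : A →ₗ[k] A →ₗ[k] A ⊗[k] A) : Prop :=
  (∀ a b : A, br b a = - (TensorProduct.comm k A A) (br a b)) ∧
  (∀ a b c : A, br a (b * c) = rAct c (br a b) + lAct b (br a c)) ∧
  (∀ a b c : A,
    brL br a (br b c) + cyc (brL br b (br c a)) + cyc (cyc (brL br c (br a b))) = 0)

/-- `(f ⊗ g) : A ⊗ A → k`. -/
def pair2 (f g : Module.Dual k A) : A ⊗[k] A →ₗ[k] k :=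
  TensorProduct.lift ((LinearMap.mul k k).compl₁₂ f g)

/-- The associated trilinear map `n(a,f,b) = (id ⊗ f)(⟪b,a⟫)`. -/
def nMap (br : A →ₗ[k] A →ₗ[k] A ⊗[k] A) (a : A) (f : Module.Dual k A) (b : A) : A :=
  TensorProduct.rid k A (TensorProduct.map LinearMap.id f (br b a))

/-- The associated trilinear map `m(f,a,g)(b) = (f ⊗ g)(⟪b,a⟫)`. -/
def mMap (br : A →ₗ[k] A →ₗ[k] A ⊗[k] A) (f : Module.Dual k A) (a : A)
    (g : Module.Dual k A) : Module.Dual k A :=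
  pair2 f g ∘ₗ br.flip a

/-- The left action of `A` on `A* = Hom_k(A,k)`: `(a·f)(c) = f(c*a)`. -/
def dL (a : A) (f : Module.Dual k A) : Module.Dual k A :=
  f ∘ₗ LinearMap.mulRight k a

/-- The right action of `A` on `A* = Hom_k(A,k)`: `(f·b)(c) = f(b*c)`. -/
def dR (f : Module.Dual k A) (b : A) : Module.Dual k A :=
  f ∘ₗ LinearMap.mulLeft k b


lemma pair2_tmul (f g : Module.Dual k A) (u v : A) :
    pair2 f g (u ⊗ₜ[k] v) = f u * g v := rfl

lemma pair2_comm (f g : Module.Dual k A) (t : A ⊗[k] A) :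
    pair2 f g ((TensorProduct.comm k A A) t) = pair2 g f t := by
  induction t using TensorProduct.induction_on with
  | zero => simp
  | tmul u v => simp [pair2_tmul, mul_comm]
  | add x y hx hy => simp [map_add, hx, hy]

lemma eval_nMap (f g : Module.Dual k A) (t : A ⊗[k] A) :
    g ((TensorProduct.rid k A) (TensorProduct.map LinearMap.id f t)) = pair2 g f t := by
  induction t using TensorProduct.induction_on with
  | zero => simp
  | tmul u v => simp [pair2_tmul, mul_comm]
  | add x y hx hy => simp [map_add, hx, hy]

lemma pair2_sep (t : A ⊗[k] A) (h : ∀ f g : Module.Dual k A, pair2 f g t = 0) :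
    t = 0 := by
  classical
  set b := Module.Basis.ofVectorSpace k A
  set B := Module.Basis.tensorProduct b b
  have hrepr : ∀ ij, B.repr t ij = 0 := by
    rintro ⟨i, j⟩
    have key : (pair2 (b.coord i) (b.coord j) : A ⊗[k] A →ₗ[k] k) t
        = B.repr t (i, j) := by
      have : ∀ s : A ⊗[k] A,
          pair2 (b.coord i) (b.coord j) s = B.repr s (i, j) := by
        intro s
        induction s using TensorProduct.induction_on with
        | zero => simp
        | tmul u v =>
          simp [pair2_tmul, B, Module.Basis.tensorProduct_repr_tmul_apply, Module.Basis.coord_apply,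
            mul_comm]
        | add x y hx hy => simp [map_add, hx, hy]
      exact this t
    rw [← key, h]
  have h0 : B.repr t = 0 := Finsupp.ext hrepr
  exact B.repr.map_eq_zero_iff.mp h0

lemma comm_comm_apply (t : A ⊗[k] A) :
    (TensorProduct.comm k A A) ((TensorProduct.comm k A A) t) = t := by
  induction t using TensorProduct.induction_on with
  | zero => simp
  | tmul u v => simp
  | add x y hx hy => simp [map_add, hx, hy]

/-- Antisymmetry of the bracket is equivalent to the cyclicity
condition `m(f,b,g)(a) = -g(n(a,f,b))` of the associated triple product. -/
theorem antisymmetry_iff_cyclicity (br : A →ₗ[k] A →ₗ[k] A ⊗[k] A) :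
    (∀ a b : A, br b a = - (TensorProduct.comm k A A) (br a b)) ↔
    (∀ (a b : A) (f g : Module.Dual k A), mMap br f b g a = - g (nMap br a f b)) := by
  have hm : ∀ (a b : A) (f g : Module.Dual k A), mMap br f b g a = pair2 f g (br a b) := by
    intros; rfl
  have hn : ∀ (a b : A) (f g : Module.Dual k A), g (nMap br a f b) = pair2 g f (br b a) := by
    intro a b f g; exact eval_nMap f g (br b a)
  constructor
  · intro h a b f g
    rw [hm, hn, h a b, map_neg, pair2_comm]
    ring
  · intro h a b
    have key : br a b + (TensorProduct.comm k A A) (br b a) = 0 := by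
      apply pair2_sep
      intro f g
      have := h a b f g
      rw [hm, hn] at this
      rw [map_add, pair2_comm, this]
      ring
    have h1 : br a b = - (TensorProduct.comm k A A) (br b a) := by
      linear_combination (norm := abel) key
    calc br b a = (TensorProduct.comm k A A) ((TensorProduct.comm k A A) (br b a)) :=
          (comm_comm_apply _).symm
      _ = - (TensorProduct.comm k A A) (br a b) := by
          rw [h1, map_neg, comm_comm_apply, neg_neg]
end
end

section
/- Let ⟪−,−⟫ be a double Poisson bracket on A and set {u,v} := μ(⟪u,v⟫), where μ : A ⊗ A → A is the multiplication map. Then {x, b} = 0 for every x ∈ [A,A] and b ∈ A, and {a, y} ∈ [A,A] for every a ∈ A and y ∈ [A,A]. (This is the well-definedness, on both arguments, of the bracket induced on A/[A,A] in Proposition 3.3, in the degree 0 case with zero differential.) -/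
open TensorProduct

noncomputable section

variable {k : Type*} [Field k] [CharZero k]
variable {A : Type*} [NonUnitalRing A] [Module k A] [SMulCommClass k A A] [IsScalarTower k A A]

/-- The multiplication map `μ : A ⊗ A → A`. -/
def mu : A ⊗[k] A →ₗ[k] A := TensorProduct.lift (LinearMap.mul k A)

/-- The `k`-linear span `[A,A]` of all commutators `ab − ba`. -/
def commSpan : Submodule k A := Submodule.span k {x : A | ∃ a b : A, x = a * b - b * a}

/-- `μ ∘ τ` : sends `u ⊗ v` to `v * u`. -/
def muT : A ⊗[k] A →ₗ[k] A := mu ∘ₗ (TensorProduct.comm k A A).toLinearMap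

lemma mu_tmul (u v : A) : mu (u ⊗ₜ[k] v) = u * v := rfl

lemma muT_tmul (u v : A) : muT (u ⊗ₜ[k] v) = v * u := rfl

lemma muT_rAct_eq_lAct (c : A) (t : A ⊗[k] A) :
    muT (rAct c t) = muT (lAct c t) := by
  induction t with
  | zero => simp
  | tmul u v =>
      simp only [rAct, lAct, TensorProduct.map_tmul, LinearMap.id_coe, id_eq,
        LinearMap.mulRight_apply, LinearMap.mulLeft_apply, muT_tmul]
      rw [mul_assoc]
  | add x y hx hy => simp [map_add, hx, hy]

lemma mu_rAct_sub_lAct_mem (c : A) (t : A ⊗[k] A) :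
    mu (rAct c t) - mu (lAct c t) ∈ (commSpan (k := k) (A := A)) := by
  induction t with
  | zero => simp [commSpan]
  | tmul u v =>
      simp only [rAct, lAct, TensorProduct.map_tmul, LinearMap.id_coe, id_eq,
        LinearMap.mulRight_apply, LinearMap.mulLeft_apply, mu_tmul]
      exact Submodule.subset_span ⟨u * v, c, by rw [mul_assoc c u v, mul_assoc u v c]⟩
  | add x y hx hy =>
      simp only [map_add]
      have : mu (rAct c x) + mu (rAct c y) - (mu (lAct c x) + mu (lAct c y)) =
          (mu (rAct c x) - mu (lAct c x)) + (mu (rAct c y) - mu (lAct c y)) := by abel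
      rw [this]
      exact Submodule.add_mem _ hx hy

lemma mu_br_comm_eq_zero (br : A →ₗ[k] A →ₗ[k] A ⊗[k] A) (h : IsDoublePoisson br)
    (b c a : A) : mu (br (b * c - c * b) a) = 0 := by
  obtain ⟨hanti, hleib, -⟩ := h
  have key : ∀ x : A, mu (br x a) = - muT (br a x) := by
    intro x
    rw [hanti a x, map_neg]
    rfl
  rw [map_sub, LinearMap.sub_apply, map_sub, key (b * c), key (c * b),
    hleib a b c, hleib a c b]
  simp only [map_add, muT_rAct_eq_lAct]
  abel

lemma mu_br_mem_comm (br : A →ₗ[k] A →ₗ[k] A ⊗[k] A) (h : IsDoublePoisson br)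
    (a b c : A) : mu (br a (b * c - c * b)) ∈ (commSpan (k := k) (A := A)) := by
  obtain ⟨-, hleib, -⟩ := h
  rw [map_sub, hleib a b c, hleib a c b]
  simp only [map_sub, map_add]
  have : mu (rAct c (br a b)) + mu (lAct b (br a c)) -
      (mu (rAct b (br a c)) + mu (lAct c (br a b))) =
      (mu (rAct c (br a b)) - mu (lAct c (br a b))) -
      (mu (rAct b (br a c)) - mu (lAct b (br a c))) := by abel
  rw [this]
  exact Submodule.sub_mem _ (mu_rAct_sub_lAct_mem c (br a b))
    (mu_rAct_sub_lAct_mem b (br a c))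

/-- For a double Poisson bracket, `{x,b} = μ(⟪x,b⟫) = 0` whenever
`x ∈ [A,A]`, and `{a,y} ∈ [A,A]` whenever `y ∈ [A,A]`. -/
theorem bracket_well_defined_on_quotient (br : A →ₗ[k] A →ₗ[k] A ⊗[k] A)
    (h : IsDoublePoisson br) :
    (∀ x ∈ (commSpan (k := k) (A := A)), ∀ b : A, mu (br x b) = 0) ∧
    (∀ a : A, ∀ y ∈ (commSpan (k := k) (A := A)),
      mu (br a y) ∈ (commSpan (k := k) (A := A))) := by
  constructor
  · intro x hx b
    induction hx using Submodule.span_induction with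
    | mem z hz =>
        obtain ⟨u, v, rfl⟩ := hz
        exact mu_br_comm_eq_zero br h u v b
    | zero => rw [map_zero, LinearMap.zero_apply, map_zero]
    | add x y _ _ hx hy => rw [map_add, LinearMap.add_apply, map_add, hx, hy, add_zero]
    | smul r x _ hx => rw [map_smul, LinearMap.smul_apply, map_smul, hx, smul_zero]
  · intro a y hy
    induction hy using Submodule.span_induction with
    | mem z hz =>
        obtain ⟨u, v, rfl⟩ := hz
        exact mu_br_mem_comm br h a u v
    | zero => simp [commSpan]
    | add x y _ _ hx hy =>
        rw [map_add, map_add]; exact Submodule.add_mem _ hx hy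
    | smul r x _ hx =>
        rw [map_smul, map_smul]; exact Submodule.smul_mem _ r hx
end
end

section
/- Let ⟪−,−⟫ be a double Poisson bracket on A and set {u,v} := μ(⟪u,v⟫), where μ : A ⊗ A → A is the multiplication map. Then {a,{b,c}} + {b,{c,a}} + {c,{a,b}} ∈ [A,A] for all a, b, c ∈ A. (This is the Jacobi identity modulo commutators for the bracket of Proposition 3.3, in the degree 0 case with zero differential.) -/
open TensorProduct

noncomputable section

variable {k : Type*} [Field k] [CharZero k]
variable {A : Type*} [NonUnitalRing A] [Module k A] [SMulCommClass k A A] [IsScalarTower k A A]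

/-- Triple multiplication `(u ⊗ v) ⊗ w ↦ u * v * w`. -/
def M3 : (A ⊗[k] A) ⊗[k] A →ₗ[k] A := mu ∘ₗ TensorProduct.map mu LinearMap.id

lemma M3_tmul (u v w : A) : M3 ((u ⊗ₜ[k] v) ⊗ₜ[k] w) = u * v * w := by
  simp [M3, mu]

lemma comm_mem (x y : A) : x * y - y * x ∈ (commSpan (k := k) (A := A)) :=
  Submodule.subset_span ⟨x, y, rfl⟩

lemma M3_cyc_mem (x : (A ⊗[k] A) ⊗[k] A) :
    M3 (cyc x) - M3 x ∈ (commSpan (k := k) (A := A)) := by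
  induction x using TensorProduct.induction_on with
  | zero => simp [Submodule.zero_mem]
  | tmul y w =>
    induction y using TensorProduct.induction_on with
    | zero => simp [Submodule.zero_mem]
    | tmul u v =>
      have hc : cyc ((u ⊗ₜ[k] v) ⊗ₜ[k] w) = (w ⊗ₜ[k] u) ⊗ₜ[k] v := by
        simp [cyc]
      rw [hc, M3_tmul, M3_tmul, mul_assoc w u v]
      exact comm_mem (k := k) w (u * v)
    | add y₁ y₂ h₁ h₂ =>
      have : M3 (cyc ((y₁ + y₂) ⊗ₜ[k] w)) - M3 ((y₁ + y₂) ⊗ₜ[k] w) =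
          (M3 (cyc (y₁ ⊗ₜ[k] w)) - M3 (y₁ ⊗ₜ[k] w)) +
          (M3 (cyc (y₂ ⊗ₜ[k] w)) - M3 (y₂ ⊗ₜ[k] w)) := by
        rw [TensorProduct.add_tmul, map_add, map_add, map_add]; abel
      rw [this]; exact Submodule.add_mem _ h₁ h₂
  | add x₁ x₂ h₁ h₂ =>
    have : M3 (cyc (x₁ + x₂)) - M3 (x₁ + x₂) =
        (M3 (cyc x₁) - M3 x₁) + (M3 (cyc x₂) - M3 x₂) := by
      rw [map_add, map_add, map_add]; abel
    rw [this]; exact Submodule.add_mem _ h₁ h₂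

lemma mu_rAct (v : A) (t : A ⊗[k] A) : mu (rAct v t) = M3 (t ⊗ₜ[k] v) := by
  induction t using TensorProduct.induction_on with
  | zero => simp
  | tmul p q => simp [rAct, mu, M3, mul_assoc]
  | add t₁ t₂ h₁ h₂ =>
    simp only [map_add, TensorProduct.add_tmul, h₁, h₂]

lemma mu_lAct_mem (u : A) (t : A ⊗[k] A) :
    mu (lAct u t) - M3 (t ⊗ₜ[k] u) ∈ (commSpan (k := k) (A := A)) := by
  induction t using TensorProduct.induction_on with
  | zero => simp [Submodule.zero_mem]
  | tmul p q =>
    have h1 : mu (lAct u (p ⊗ₜ[k] q)) = u * (p * q) := by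
      simp [lAct, mu, mul_assoc]
    rw [h1, M3_tmul]
    exact comm_mem u (p * q)
  | add t₁ t₂ h₁ h₂ =>
    have : mu (lAct u (t₁ + t₂)) - M3 ((t₁ + t₂) ⊗ₜ[k] u) =
        (mu (lAct u t₁) - M3 (t₁ ⊗ₜ[k] u)) + (mu (lAct u t₂) - M3 (t₂ ⊗ₜ[k] u)) := by
      rw [map_add, map_add, TensorProduct.add_tmul, map_add]; abel
    rw [this]; exact Submodule.add_mem _ h₁ h₂

lemma key_mem (br : A →ₗ[k] A →ₗ[k] A ⊗[k] A)
    (hL : ∀ a b c : A, br a (b * c) = rAct c (br a b) + lAct b (br a c))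
    (a : A) (x : A ⊗[k] A) :
    mu (br a (mu x)) - M3 (brL br a x) - M3 (brL br a ((TensorProduct.comm k A A) x))
      ∈ (commSpan (k := k) (A := A)) := by
  induction x using TensorProduct.induction_on with
  | zero => simp [Submodule.zero_mem]
  | tmul u v =>
    have h1 : mu (u ⊗ₜ[k] v) = u * v := by simp [mu]
    have h2 : brL br a (u ⊗ₜ[k] v) = (br a u) ⊗ₜ[k] v := by simp [brL]
    have h3 : (TensorProduct.comm k A A) (u ⊗ₜ[k] v) = v ⊗ₜ[k] u := rfl
    have h4 : brL br a (v ⊗ₜ[k] u) = (br a v) ⊗ₜ[k] u := by simp [brL]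
    rw [h1, h2, h3, h4, hL a u v, map_add, mu_rAct v (br a u)]
    have : M3 ((br a u) ⊗ₜ[k] v) + mu (lAct u (br a v)) - M3 ((br a u) ⊗ₜ[k] v)
        - M3 ((br a v) ⊗ₜ[k] u) = mu (lAct u (br a v)) - M3 ((br a v) ⊗ₜ[k] u) := by
      abel
    rw [this]
    exact mu_lAct_mem u (br a v)
  | add x₁ x₂ h₁ h₂ =>
    have : mu (br a (mu (x₁ + x₂))) - M3 (brL br a (x₁ + x₂))
        - M3 (brL br a ((TensorProduct.comm k A A) (x₁ + x₂))) =
        (mu (br a (mu x₁)) - M3 (brL br a x₁)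
          - M3 (brL br a ((TensorProduct.comm k A A) x₁))) +
        (mu (br a (mu x₂)) - M3 (brL br a x₂)
          - M3 (brL br a ((TensorProduct.comm k A A) x₂))) := by
      simp only [map_add]; abel
    rw [this]; exact Submodule.add_mem _ h₁ h₂

/-- For a double Poisson bracket, with `{u,v} := μ(⟪u,v⟫)`, the Jacobi
sum `{a,{b,c}} + {b,{c,a}} + {c,{a,b}}` lies in `[A,A]` for all `a, b, c ∈ A`. -/
theorem jacobi_mod_commutators (br : A →ₗ[k] A →ₗ[k] A ⊗[k] A)
    (h : IsDoublePoisson br) :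
    ∀ a b c : A,
      mu (br a (mu (br b c))) + mu (br b (mu (br c a))) + mu (br c (mu (br a b)))
        ∈ (commSpan (k := k) (A := A)) := by
  obtain ⟨hA, hL, hJ⟩ := h
  intro a b c
  -- antisymmetry rewrites
  have hcomm : ∀ x y : A, (TensorProduct.comm k A A) (br x y) = -(br y x) := by
    intro x y
    rw [hA x y, neg_neg]
  -- the three Leibniz-decompositions
  have m1 := key_mem br hL a (br b c)
  have m2 := key_mem br hL b (br c a)
  have m3 := key_mem br hL c (br a b)
  rw [hcomm b c, map_neg, map_neg] at m1
  rw [hcomm c a, map_neg, map_neg] at m2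
  rw [hcomm a b, map_neg, map_neg] at m3
  -- names for the six tensors
  set X₁ := brL br a (br b c) with hX₁
  set X₂ := brL br b (br c a) with hX₂
  set X₃ := brL br c (br a b) with hX₃
  set Y₁ := brL br a (br c b) with hY₁
  set Y₂ := brL br b (br a c) with hY₂
  set Y₃ := brL br c (br b a) with hY₃
  -- double Jacobi identities
  have hz1 : M3 X₁ + M3 (cyc X₂) + M3 (cyc (cyc X₃)) = 0 := by
    rw [← map_add, ← map_add, hJ a b c, map_zero]
  have hz2 : M3 Y₁ + M3 (cyc Y₃) + M3 (cyc (cyc Y₂)) = 0 := by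
    rw [← map_add, ← map_add, hJ a c b, map_zero]
  -- cyclicity mod commutators
  have c2 : M3 (cyc X₂) - M3 X₂ ∈ (commSpan (k := k) (A := A)) := M3_cyc_mem X₂
  have c3 : M3 (cyc (cyc X₃)) - M3 X₃ ∈ (commSpan (k := k) (A := A)) := by
    have h1 := M3_cyc_mem (cyc X₃)
    have h2 := M3_cyc_mem X₃
    have : M3 (cyc (cyc X₃)) - M3 X₃ =
        (M3 (cyc (cyc X₃)) - M3 (cyc X₃)) + (M3 (cyc X₃) - M3 X₃) := by abel
    rw [this]; exact Submodule.add_mem _ h1 h2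
  have d3 : M3 (cyc Y₃) - M3 Y₃ ∈ (commSpan (k := k) (A := A)) := M3_cyc_mem Y₃
  have d2 : M3 (cyc (cyc Y₂)) - M3 Y₂ ∈ (commSpan (k := k) (A := A)) := by
    have h1 := M3_cyc_mem (cyc Y₂)
    have h2 := M3_cyc_mem Y₂
    have : M3 (cyc (cyc Y₂)) - M3 Y₂ =
        (M3 (cyc (cyc Y₂)) - M3 (cyc Y₂)) + (M3 (cyc Y₂) - M3 Y₂) := by abel
    rw [this]; exact Submodule.add_mem _ h1 h2
  -- assemble
  have hx1 : M3 X₁ = -(M3 (cyc X₂) + M3 (cyc (cyc X₃))) := by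
    have := hz1; rw [add_assoc] at this
    exact eq_neg_of_add_eq_zero_left this
  have hy1 : M3 Y₁ = -(M3 (cyc Y₃) + M3 (cyc (cyc Y₂))) := by
    have := hz2; rw [add_assoc] at this
    exact eq_neg_of_add_eq_zero_left this
  have hS : mu (br a (mu (br b c))) + mu (br b (mu (br c a))) + mu (br c (mu (br a b)))
      = (mu (br a (mu (br b c))) - M3 X₁ - -M3 Y₁)
        + (mu (br b (mu (br c a))) - M3 X₂ - -M3 Y₂)
        + (mu (br c (mu (br a b))) - M3 X₃ - -M3 Y₃)
        - (M3 (cyc X₂) - M3 X₂) - (M3 (cyc (cyc X₃)) - M3 X₃)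
        + (M3 (cyc Y₃) - M3 Y₃) + (M3 (cyc (cyc Y₂)) - M3 Y₂) := by
    rw [hx1, hy1]; abel
  rw [hS]
  exact Submodule.add_mem _ (Submodule.add_mem _ (Submodule.sub_mem _ (Submodule.sub_mem _
    (Submodule.add_mem _ (Submodule.add_mem _ m1 m2) m3) c2) c3) d3) d2
end
end

section
/- Let φ : (A, ⟪−,−⟫_A) → (B, ⟪−,−⟫_B) be a morphism of double Poisson algebras, and define the mixed trilinear maps n_φ(a, f, b) := n_A(a, f∘φ, b) for a, b ∈ A, f ∈ B*, and m_φ(f, a, g) := m_B(f, φ(a), g) for f, g ∈ B*, a ∈ A. Then n_φ(n_φ(a,f,b), g, c) + n_φ(a, m_φ(f,b,g), c) − n_φ(a, f, n_φ(b,g,c)) = 0 for all a, b, c ∈ A and f, g ∈ B*. (This is the quintic Stasheff identity SI(5) for the A∞-structure on ∂_{d−1}φ = A ⊕ B*[d−1] constructed in Theorem 5.5, in the degree 0, trivially graded case.) -/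
open TensorProduct

noncomputable section

variable {k : Type*} [Field k] [CharZero k]
variable {A : Type*} [NonUnitalRing A] [Module k A] [SMulCommClass k A A] [IsScalarTower k A A]

variable {B : Type*} [NonUnitalRing B] [Module k B] [SMulCommClass k B B]
  [IsScalarTower k B B]

/-- A morphism of double Poisson algebras: an algebra morphism intertwining the
brackets, `(φ ⊗ φ)(⟪a,a'⟫_A) = ⟪φ(a), φ(a')⟫_B`. -/
def IsDPMorphism (brA : A →ₗ[k] A →ₗ[k] A ⊗[k] A) (brB : B →ₗ[k] B →ₗ[k] B ⊗[k] B)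
    (φ : A →ₙₐ[k] B) : Prop :=
  ∀ a a' : A,
    TensorProduct.map (φ : A →ₗ[k] B) (φ : A →ₗ[k] B) (brA a a') = brB (φ a) (φ a')

/-- The mixed triple product `n_φ(a, f, b) := n_A(a, f∘φ, b)` for `f ∈ B*`. -/
def nPhi (brA : A →ₗ[k] A →ₗ[k] A ⊗[k] A) (φ : A →ₙₐ[k] B)
    (a : A) (f : Module.Dual k B) (b : A) : A :=
  nMap brA a (f ∘ₗ (φ : A →ₗ[k] B)) b

/-- The mixed triple product `m_φ(f, a, g) := m_B(f, φ(a), g)` for `f, g ∈ B*`. -/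
def mPhi (brB : B →ₗ[k] B →ₗ[k] B ⊗[k] B) (φ : A →ₙₐ[k] B)
    (f : Module.Dual k B) (a : A) (g : Module.Dual k B) : Module.Dual k B :=
  mMap brB f (φ a) g

/-- `(id ⊗ F)` followed by `rid`, as a linear map `A ⊗ A → A`. -/
def Ntil (F : Module.Dual k A) : A ⊗[k] A →ₗ[k] A :=
  (TensorProduct.rid k A).toLinearMap ∘ₗ TensorProduct.map LinearMap.id F

lemma Ntil_tmul (F : Module.Dual k A) (u v : A) : Ntil F (u ⊗ₜ[k] v) = F v • u := by
  simp [Ntil]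

lemma nMap_eq_Ntil (br : A →ₗ[k] A →ₗ[k] A ⊗[k] A) (a : A) (F : Module.Dual k A) (b : A) :
    nMap br a F b = Ntil F (br b a) := rfl

/-- The functional `(u⊗v)⊗w ↦ F w • G v • u`. -/
def Phi (G F : Module.Dual k A) : (A ⊗[k] A) ⊗[k] A →ₗ[k] A :=
  (TensorProduct.rid k A).toLinearMap ∘ₗ TensorProduct.map (Ntil G) F

lemma Phi_tmul (G F : Module.Dual k A) (s : A ⊗[k] A) (w : A) :
    Phi G F (s ⊗ₜ[k] w) = F w • Ntil G s := by
  simp [Phi]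

lemma cyc_tmul (u v w : A) :
    (cyc ((u ⊗ₜ[k] v) ⊗ₜ[k] w) : (A ⊗[k] A) ⊗[k] A) = (w ⊗ₜ[k] u) ⊗ₜ[k] v := by
  simp [cyc]

lemma brL_tmul (br : A →ₗ[k] A →ₗ[k] A ⊗[k] A) (x u v : A) :
    brL br x (u ⊗ₜ[k] v) = (br x u) ⊗ₜ[k] v := by
  simp [brL]

lemma Phi_cyc_tmul (G F : Module.Dual k A) (s : A ⊗[k] A) (w : A) :
    Phi G F (cyc (s ⊗ₜ[k] w)) = (pair2 F G ((TensorProduct.comm k A A) s)) • w := by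
  induction s using TensorProduct.induction_on with
  | zero => simp [cyc]
  | tmul p q => simp [cyc_tmul, Phi_tmul, Ntil_tmul, pair2, mul_smul, smul_comm (G p)]
  | add x y hx hy =>
      rw [TensorProduct.add_tmul, map_add, map_add, hx, hy, map_add, map_add,
        add_smul]

lemma Phi_cyc2_tmul (G F : Module.Dual k A) (s : A ⊗[k] A) (w : A) :
    Phi G F (cyc (cyc (s ⊗ₜ[k] w))) = G w • Ntil F ((TensorProduct.comm k A A) s) := by
  induction s using TensorProduct.induction_on with
  | zero => simp [cyc]
  | tmul p q => simp [cyc_tmul, Phi_tmul, Ntil_tmul, mul_smul, smul_comm (F p)]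
  | add x y hx hy =>
      rw [TensorProduct.add_tmul, map_add, map_add, map_add, hx, hy, map_add, map_add,
        smul_add]

lemma lem1 (br : A →ₗ[k] A →ₗ[k] A ⊗[k] A) (c : A) (F G : Module.Dual k A)
    (t : A ⊗[k] A) :
    Ntil G (br c (Ntil F t)) = Phi G F (brL br c t) := by
  induction t using TensorProduct.induction_on with
  | zero => simp
  | tmul u v => rw [Ntil_tmul, map_smul, map_smul, brL_tmul, Phi_tmul]
  | add x y hx hy => rw [map_add, map_add, map_add, hx, hy, map_add, map_add]

lemma lem2 (br : A →ₗ[k] A →ₗ[k] A ⊗[k] A) (hA : IsDoublePoisson br) (b : A)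
    (F G : Module.Dual k A) (t : A ⊗[k] A) :
    Ntil (pair2 F G ∘ₗ br.flip b) t = - Phi G F (cyc (brL br b ((TensorProduct.comm k A A) t))) := by
  induction t using TensorProduct.induction_on with
  | zero => simp
  | tmul w₁ w₂ =>
      rw [Ntil_tmul]
      have h : br.flip b w₂ = - (TensorProduct.comm k A A) (br b w₂) := hA.1 b w₂
      rw [LinearMap.comp_apply, h, map_neg, TensorProduct.comm_tmul, brL_tmul,
        Phi_cyc_tmul, neg_smul]
  | add x y hx hy =>
      rw [map_add, hx, hy, map_add, map_add, map_add, map_add, neg_add]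

lemma lem3 (br : A →ₗ[k] A →ₗ[k] A ⊗[k] A) (hA : IsDoublePoisson br) (a : A)
    (F G : Module.Dual k A) (t : A ⊗[k] A) :
    Ntil F (br (Ntil G t) a) = - Phi G F (cyc (cyc (brL br a t))) := by
  induction t using TensorProduct.induction_on with
  | zero => simp
  | tmul s₁ s₂ =>
      rw [Ntil_tmul, map_smul, LinearMap.smul_apply, map_smul]
      have h : br s₁ a = - (TensorProduct.comm k A A) (br a s₁) := hA.1 a s₁
      rw [h, map_neg, brL_tmul, Phi_cyc2_tmul, smul_neg]
  | add x y hx hy =>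
      rw [map_add, map_add, LinearMap.add_apply, map_add, hx, hy, map_add, map_add,
        map_add, map_add, neg_add]

lemma pair2_map {B : Type*} [NonUnitalRing B] [Module k B] [SMulCommClass k B B]
    [IsScalarTower k B B] (f g : Module.Dual k B) (ψ : A →ₗ[k] B) (s : A ⊗[k] A) :
    pair2 f g (TensorProduct.map ψ ψ s) = pair2 (f ∘ₗ ψ) (g ∘ₗ ψ) s := by
  induction s using TensorProduct.induction_on with
  | zero => simp
  | tmul u v => simp [pair2]
  | add x y hx hy => rw [map_add, map_add, map_add, hx, hy]

/-- The quintic Stasheff identity SI(5) for the mixed triple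
products `n_φ`, `m_φ` on `∂φ = A ⊕ B*[-1]`:
`n_φ(n_φ(a,f,b), g, c) + n_φ(a, m_φ(f,b,g), c) − n_φ(a, f, n_φ(b,g,c)) = 0`. -/
theorem mixed_quintic_stasheff (brA : A →ₗ[k] A →ₗ[k] A ⊗[k] A)
    (brB : B →ₗ[k] B →ₗ[k] B ⊗[k] B) (hA : IsDoublePoisson brA)
    (hB : IsDoublePoisson brB) (φ : A →ₙₐ[k] B) (hφ : IsDPMorphism brA brB φ) :
    ∀ (a b c : A) (f g : Module.Dual k B),
      nPhi brA φ (nPhi brA φ a f b) g c + nPhi brA φ a (mPhi brB φ f b g) c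
        - nPhi brA φ a f (nPhi brA φ b g c) = 0 := by
  intro a b c f g
  set F : Module.Dual k A := f ∘ₗ (φ : A →ₗ[k] B) with hF
  set G : Module.Dual k A := g ∘ₗ (φ : A →ₗ[k] B) with hG
  -- the pullback of `mPhi` along `φ` is `pair2 F G ∘ brA.flip b`
  have hM : (mPhi brB φ f b g) ∘ₗ (φ : A →ₗ[k] B) = pair2 F G ∘ₗ brA.flip b := by
    ext x
    simp only [mPhi, mMap, LinearMap.comp_apply, LinearMap.flip_apply]
    rw [show (φ : A →ₗ[k] B) x = φ x from rfl, ← hφ x b, pair2_map]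
  have hT1 : nPhi brA φ (nPhi brA φ a f b) g c = Phi G F (brL brA c (brA b a)) := by
    simp only [nPhi, nMap_eq_Ntil, ← hF, ← hG]
    exact lem1 brA c F G (brA b a)
  have hT2 : nPhi brA φ a (mPhi brB φ f b g) c
      = Phi G F (cyc (brL brA b (brA a c))) := by
    simp only [nPhi, nMap_eq_Ntil, hM]
    rw [lem2 brA hA b F G (brA c a)]
    have h : brA a c = - (TensorProduct.comm k A A) (brA c a) := hA.1 c a
    rw [h, map_neg, map_neg, map_neg]
  have hT3 : nPhi brA φ a f (nPhi brA φ b g c)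
      = - Phi G F (cyc (cyc (brL brA a (brA c b)))) := by
    simp only [nPhi, nMap_eq_Ntil, ← hF, ← hG]
    exact lem3 brA hA a F G (brA c b)
  rw [hT1, hT2, hT3, sub_neg_eq_add, ← map_add, ← map_add, hA.2.2 c b a, map_zero]
end
end
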